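/- Let q = (q_0, ..., q_5) ∈ ℤ^6 satisfy the Bazaikin freeness condition. Then −σ_2(q) ≡ 7 (mod 24) or −σ_2(q) ≡ 15 (mod 24). (This is Corollary 3.2(a): the first Pontryagin class p_1 = −σ_2(q) of a Bazaikin space satisfies p_1 = 7 or 15 mod 24.) -/
import Mathlib

/-- The `k`-th elementary symmetric polynomial of the tuple `q`. -/
def esymm {n : ℕ} (k : ℕ) (q : Fin n → ℤ) : ℤ :=
  ∑ t ∈ Finset.univ.powersetCard k, ∏ i ∈ t, q i

/-- The Bazaikin freeness condition: the entries sum to zero, all entries are odd,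
and `gcd (q a + q b, q c + q d) = 2` for all pairwise distinct indices `a b c d`. -/
def BazaikinFree (q : Fin 6 → ℤ) : Prop :=
  (∑ i, q i) = 0 ∧ (∀ i, Odd (q i)) ∧
    ∀ a b c d : Fin 6, a ≠ b → a ≠ c → a ≠ d → b ≠ c → b ≠ d → c ≠ d →
      Int.gcd (q a + q b) (q c + q d) = 2

/-- The positive curvature condition: there is an index `i₀` such that
`q i + q j > 0` for all pairs `i < j` avoiding `i₀`, or `q i + q j < 0` for all such pairs. -/
def PosCurv (q : Fin 6 → ℤ) : Prop :=
  ∃ i₀ : Fin 6,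
    (∀ i j : Fin 6, i < j → i ≠ i₀ → j ≠ i₀ → 0 < q i + q j) ∨
    (∀ i j : Fin 6, i < j → i ≠ i₀ → j ≠ i₀ → q i + q j < 0)

private lemma pair4 (x y u v cx cy cu cv : ℤ)
    (hx : x = 2*cx+1) (hy : y = 2*cy+1) (hu : u = 2*cu+1) (hv : v = 2*cv+1)
    (k : ¬((x + y) % 4 = 0 ∧ (u + v) % 4 = 0)) :
    cx % 2 = cy % 2 ∨ cu % 2 = cv % 2 := by omega

private lemma mod3_two_zeros (z1 z2 a b c d : ℤ)
    (hz1 : z1 % 3 = 0) (hz2 : z2 % 3 = 0)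
    (ha : a % 3 ≠ 0) (hb : b % 3 ≠ 0) (hc : c % 3 ≠ 0) (hd : d % 3 ≠ 0)
    (hs : z1 + z2 + a + b + c + d = 0)
    (k1 : ¬((z1 + z2) % 3 = 0 ∧ (a + b) % 3 = 0))
    (k2 : ¬((z1 + z2) % 3 = 0 ∧ (a + c) % 3 = 0))
    (k3 : ¬((z1 + z2) % 3 = 0 ∧ (a + d) % 3 = 0)) : False := by
  have ra : a % 3 = 1 ∨ a % 3 = 2 := by omega
  have rb : b % 3 = 1 ∨ b % 3 = 2 := by omega
  have rc : c % 3 = 1 ∨ c % 3 = 2 := by omega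
  have rd : d % 3 = 1 ∨ d % 3 = 2 := by omega
  rcases ra with ra | ra <;> rcases rb with rb | rb <;> rcases rc with rc | rc <;>
    rcases rd with rd | rd <;> omega

private lemma sq_mod4 (c : ℤ) : c ^ 2 % 4 = c % 2 := by
  rcases Int.even_or_odd c with ⟨k, hk⟩ | ⟨k, hk⟩ <;> subst hk
  · have h : (k + k) ^ 2 = 4 * (k * k) := by ring
    rw [h]; generalize k * k = m; omega
  · have h : (2 * k + 1) ^ 2 = 4 * (k * k) + 4 * k + 1 := by ring
    rw [h]; generalize k * k = m; omega

private lemma sq_mod3 (x : ℤ) : (x % 3 = 0 ∧ x ^ 2 % 3 = 0) ∨ (x % 3 ≠ 0 ∧ x ^ 2 % 3 = 1) := by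
  have h : x % 3 = 0 ∨ x % 3 = 1 ∨ x % 3 = 2 := by omega
  rcases h with h | h | h
  · left
    refine ⟨h, ?_⟩
    obtain ⟨k, hk⟩ : ∃ k, x = 3 * k := ⟨x / 3, by omega⟩
    have h2 : x ^ 2 = 3 * (3 * (k * k)) := by rw [hk]; ring
    rw [h2]; generalize k * k = m; omega
  · right
    refine ⟨by omega, ?_⟩
    obtain ⟨k, hk⟩ : ∃ k, x = 3 * k + 1 := ⟨x / 3, by omega⟩
    have h2 : x ^ 2 = 3 * (3 * (k * k) + 2 * k) + 1 := by rw [hk]; ring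
    rw [h2]; generalize k * k = m; omega
  · right
    refine ⟨by omega, ?_⟩
    obtain ⟨k, hk⟩ : ∃ k, x = 3 * k + 2 := ⟨x / 3, by omega⟩
    have h2 : x ^ 2 = 3 * (3 * (k * k) + 4 * k + 1) + 1 := by rw [hk]; ring
    rw [h2]; generalize k * k = m; omega

set_option maxHeartbeats 4000000 in
theorem p1_mod_twentyfour (q : Fin 6 → ℤ) (h : BazaikinFree q) :
    (-esymm 2 q ≡ 7 [ZMOD 24]) ∨ (-esymm 2 q ≡ 15 [ZMOD 24]) := by
  obtain ⟨hsum, hodd, hgcd⟩ := h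
  set s2 := esymm 2 q with hs2
  have hexp : (∑ i, q i) ^ 2 = (∑ i, (q i) ^ 2) + 2 * s2 := by
    have hpc : (Finset.univ.powersetCard 2 : Finset (Finset (Fin 6))) =
      {{0,1},{0,2},{0,3},{0,4},{0,5},{1,2},{1,3},{1,4},{1,5},{2,3},{2,4},{2,5},{3,4},{3,5},{4,5}} := by
      decide
    rw [hs2, esymm, hpc, Fin.sum_univ_six, Fin.sum_univ_six]
    simp +decide [Finset.sum_insert, Finset.prod_insert]
    ring
  rw [hsum] at hexp
  rw [Fin.sum_univ_six] at hexp
  have key : (q 0) ^ 2 + (q 1) ^ 2 + (q 2) ^ 2 + (q 3) ^ 2 + (q 4) ^ 2 + (q 5) ^ 2 = -2 * s2 := by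
    linarith
  rw [Fin.sum_univ_six] at hsum
  have h4 : ∀ a b c d : Fin 6, a ≠ b → a ≠ c → a ≠ d → b ≠ c → b ≠ d → c ≠ d →
      ¬((q a + q b) % 4 = 0 ∧ (q c + q d) % 4 = 0) := by
    intro a b c d hab hac had hbc hbd hcd hh
    have hg := hgcd a b c d hab hac had hbc hbd hcd
    have d1 : (4 : ℤ) ∣ (q a + q b) := by omega
    have d2 : (4 : ℤ) ∣ (q c + q d) := by omega
    have hd := Int.dvd_gcd d1 d2
    rw [hg] at hd
    norm_num at hd
  have h3 : ∀ a b c d : Fin 6, a ≠ b → a ≠ c → a ≠ d → b ≠ c → b ≠ d → c ≠ d →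
      ¬((q a + q b) % 3 = 0 ∧ (q c + q d) % 3 = 0) := by
    intro a b c d hab hac had hbc hbd hcd hh
    have hg := hgcd a b c d hab hac had hbc hbd hcd
    have d1 : (3 : ℤ) ∣ (q a + q b) := by omega
    have d2 : (3 : ℤ) ∣ (q c + q d) := by omega
    have hd := Int.dvd_gcd d1 d2
    rw [hg] at hd
    norm_num at hd
  -- Step B : s2 % 3 ≠ 1
  have hB : s2 % 3 ≠ 1 := by
    have hm0 := sq_mod3 (q 0)
    have hm1 := sq_mod3 (q 1)
    have hm2 := sq_mod3 (q 2)
    have hm3 := sq_mod3 (q 3)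
    have hm4 := sq_mod3 (q 4)
    have hm5 := sq_mod3 (q 5)
    obtain ⟨t0, ht0⟩ : ∃ t, (q 0) ^ 2 = t := ⟨_, rfl⟩
    obtain ⟨t1, ht1⟩ : ∃ t, (q 1) ^ 2 = t := ⟨_, rfl⟩
    obtain ⟨t2, ht2⟩ : ∃ t, (q 2) ^ 2 = t := ⟨_, rfl⟩
    obtain ⟨t3, ht3⟩ : ∃ t, (q 3) ^ 2 = t := ⟨_, rfl⟩
    obtain ⟨t4, ht4⟩ : ∃ t, (q 4) ^ 2 = t := ⟨_, rfl⟩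
    obtain ⟨t5, ht5⟩ : ∃ t, (q 5) ^ 2 = t := ⟨_, rfl⟩
    rw [ht0, ht1, ht2, ht3, ht4, ht5] at key
    rw [ht0] at hm0
    rw [ht1] at hm1
    rw [ht2] at hm2
    rw [ht3] at hm3
    rw [ht4] at hm4
    rw [ht5] at hm5
    clear ht0 ht1 ht2 ht3 ht4 ht5 hexp hgcd hodd h4 hs2
    rcases hm0 with ⟨a0, b0⟩ | ⟨a0, b0⟩
    · rcases hm1 with ⟨a1, b1⟩ | ⟨a1, b1⟩
      · rcases hm2 with ⟨a2, b2⟩ | ⟨a2, b2⟩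
        · rcases hm3 with ⟨a3, b3⟩ | ⟨a3, b3⟩
          · rcases hm4 with ⟨a4, b4⟩ | ⟨a4, b4⟩
            · rcases hm5 with ⟨a5, b5⟩ | ⟨a5, b5⟩
              · omega
              · omega
            · rcases hm5 with ⟨a5, b5⟩ | ⟨a5, b5⟩
              · omega
              · omega
          · rcases hm4 with ⟨a4, b4⟩ | ⟨a4, b4⟩
            · rcases hm5 with ⟨a5, b5⟩ | ⟨a5, b5⟩
              · omega
              · omega
            · rcases hm5 with ⟨a5, b5⟩ | ⟨a5, b5⟩
              · omega
              · omega
        · rcases hm3 with ⟨a3, b3⟩ | ⟨a3, b3⟩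
          · rcases hm4 with ⟨a4, b4⟩ | ⟨a4, b4⟩
            · rcases hm5 with ⟨a5, b5⟩ | ⟨a5, b5⟩
              · omega
              · omega
            · rcases hm5 with ⟨a5, b5⟩ | ⟨a5, b5⟩
              · omega
              · omega
          · rcases hm4 with ⟨a4, b4⟩ | ⟨a4, b4⟩
            · rcases hm5 with ⟨a5, b5⟩ | ⟨a5, b5⟩
              · omega
              · omega
            · rcases hm5 with ⟨a5, b5⟩ | ⟨a5, b5⟩
              · omega
              · have k1 := h3 0 1 2 3 (by decide) (by decide) (by decide) (by decide) (by decide) (by decide)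
                have k2 := h3 0 1 2 4 (by decide) (by decide) (by decide) (by decide) (by decide) (by decide)
                have k3 := h3 0 1 2 5 (by decide) (by decide) (by decide) (by decide) (by decide) (by decide)
                exact (mod3_two_zeros (q 0) (q 1) (q 2) (q 3) (q 4) (q 5) a0 a1 a2 a3 a4 a5 (by omega) k1 k2 k3).elim
      · rcases hm2 with ⟨a2, b2⟩ | ⟨a2, b2⟩
        · rcases hm3 with ⟨a3, b3⟩ | ⟨a3, b3⟩
          · rcases hm4 with ⟨a4, b4⟩ | ⟨a4, b4⟩
            · rcases hm5 with ⟨a5, b5⟩ | ⟨a5, b5⟩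
              · omega
              · omega
            · rcases hm5 with ⟨a5, b5⟩ | ⟨a5, b5⟩
              · omega
              · omega
          · rcases hm4 with ⟨a4, b4⟩ | ⟨a4, b4⟩
            · rcases hm5 with ⟨a5, b5⟩ | ⟨a5, b5⟩
              · omega
              · omega
            · rcases hm5 with ⟨a5, b5⟩ | ⟨a5, b5⟩
              · omega
              · have k1 := h3 0 2 1 3 (by decide) (by decide) (by decide) (by decide) (by decide) (by decide)
                have k2 := h3 0 2 1 4 (by decide) (by decide) (by decide) (by decide) (by decide) (by decide)
                have k3 := h3 0 2 1 5 (by decide) (by decide) (by decide) (by decide) (by decide) (by decide)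
                exact (mod3_two_zeros (q 0) (q 2) (q 1) (q 3) (q 4) (q 5) a0 a2 a1 a3 a4 a5 (by omega) k1 k2 k3).elim
        · rcases hm3 with ⟨a3, b3⟩ | ⟨a3, b3⟩
          · rcases hm4 with ⟨a4, b4⟩ | ⟨a4, b4⟩
            · rcases hm5 with ⟨a5, b5⟩ | ⟨a5, b5⟩
              · omega
              · omega
            · rcases hm5 with ⟨a5, b5⟩ | ⟨a5, b5⟩
              · omega
              · have k1 := h3 0 3 1 2 (by decide) (by decide) (by decide) (by decide) (by decide) (by decide)
                have k2 := h3 0 3 1 4 (by decide) (by decide) (by decide) (by decide) (by decide) (by decide)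
                have k3 := h3 0 3 1 5 (by decide) (by decide) (by decide) (by decide) (by decide) (by decide)
                exact (mod3_two_zeros (q 0) (q 3) (q 1) (q 2) (q 4) (q 5) a0 a3 a1 a2 a4 a5 (by omega) k1 k2 k3).elim
          · rcases hm4 with ⟨a4, b4⟩ | ⟨a4, b4⟩
            · rcases hm5 with ⟨a5, b5⟩ | ⟨a5, b5⟩
              · omega
              · have k1 := h3 0 4 1 2 (by decide) (by decide) (by decide) (by decide) (by decide) (by decide)
                have k2 := h3 0 4 1 3 (by decide) (by decide) (by decide) (by decide) (by decide) (by decide)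
                have k3 := h3 0 4 1 5 (by decide) (by decide) (by decide) (by decide) (by decide) (by decide)
                exact (mod3_two_zeros (q 0) (q 4) (q 1) (q 2) (q 3) (q 5) a0 a4 a1 a2 a3 a5 (by omega) k1 k2 k3).elim
            · rcases hm5 with ⟨a5, b5⟩ | ⟨a5, b5⟩
              · have k1 := h3 0 5 1 2 (by decide) (by decide) (by decide) (by decide) (by decide) (by decide)
                have k2 := h3 0 5 1 3 (by decide) (by decide) (by decide) (by decide) (by decide) (by decide)
                have k3 := h3 0 5 1 4 (by decide) (by decide) (by decide) (by decide) (by decide) (by decide)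
                exact (mod3_two_zeros (q 0) (q 5) (q 1) (q 2) (q 3) (q 4) a0 a5 a1 a2 a3 a4 (by omega) k1 k2 k3).elim
              · omega
    · rcases hm1 with ⟨a1, b1⟩ | ⟨a1, b1⟩
      · rcases hm2 with ⟨a2, b2⟩ | ⟨a2, b2⟩
        · rcases hm3 with ⟨a3, b3⟩ | ⟨a3, b3⟩
          · rcases hm4 with ⟨a4, b4⟩ | ⟨a4, b4⟩
            · rcases hm5 with ⟨a5, b5⟩ | ⟨a5, b5⟩
              · omega
              · omega
            · rcases hm5 with ⟨a5, b5⟩ | ⟨a5, b5⟩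
              · omega
              · omega
          · rcases hm4 with ⟨a4, b4⟩ | ⟨a4, b4⟩
            · rcases hm5 with ⟨a5, b5⟩ | ⟨a5, b5⟩
              · omega
              · omega
            · rcases hm5 with ⟨a5, b5⟩ | ⟨a5, b5⟩
              · omega
              · have k1 := h3 1 2 0 3 (by decide) (by decide) (by decide) (by decide) (by decide) (by decide)
                have k2 := h3 1 2 0 4 (by decide) (by decide) (by decide) (by decide) (by decide) (by decide)
                have k3 := h3 1 2 0 5 (by decide) (by decide) (by decide) (by decide) (by decide) (by decide)
                exact (mod3_two_zeros (q 1) (q 2) (q 0) (q 3) (q 4) (q 5) a1 a2 a0 a3 a4 a5 (by omega) k1 k2 k3).elim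
        · rcases hm3 with ⟨a3, b3⟩ | ⟨a3, b3⟩
          · rcases hm4 with ⟨a4, b4⟩ | ⟨a4, b4⟩
            · rcases hm5 with ⟨a5, b5⟩ | ⟨a5, b5⟩
              · omega
              · omega
            · rcases hm5 with ⟨a5, b5⟩ | ⟨a5, b5⟩
              · omega
              · have k1 := h3 1 3 0 2 (by decide) (by decide) (by decide) (by decide) (by decide) (by decide)
                have k2 := h3 1 3 0 4 (by decide) (by decide) (by decide) (by decide) (by decide) (by decide)
                have k3 := h3 1 3 0 5 (by decide) (by decide) (by decide) (by decide) (by decide) (by decide)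
                exact (mod3_two_zeros (q 1) (q 3) (q 0) (q 2) (q 4) (q 5) a1 a3 a0 a2 a4 a5 (by omega) k1 k2 k3).elim
          · rcases hm4 with ⟨a4, b4⟩ | ⟨a4, b4⟩
            · rcases hm5 with ⟨a5, b5⟩ | ⟨a5, b5⟩
              · omega
              · have k1 := h3 1 4 0 2 (by decide) (by decide) (by decide) (by decide) (by decide) (by decide)
                have k2 := h3 1 4 0 3 (by decide) (by decide) (by decide) (by decide) (by decide) (by decide)
                have k3 := h3 1 4 0 5 (by decide) (by decide) (by decide) (by decide) (by decide) (by decide)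
                exact (mod3_two_zeros (q 1) (q 4) (q 0) (q 2) (q 3) (q 5) a1 a4 a0 a2 a3 a5 (by omega) k1 k2 k3).elim
            · rcases hm5 with ⟨a5, b5⟩ | ⟨a5, b5⟩
              · have k1 := h3 1 5 0 2 (by decide) (by decide) (by decide) (by decide) (by decide) (by decide)
                have k2 := h3 1 5 0 3 (by decide) (by decide) (by decide) (by decide) (by decide) (by decide)
                have k3 := h3 1 5 0 4 (by decide) (by decide) (by decide) (by decide) (by decide) (by decide)
                exact (mod3_two_zeros (q 1) (q 5) (q 0) (q 2) (q 3) (q 4) a1 a5 a0 a2 a3 a4 (by omega) k1 k2 k3).elim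
              · omega
      · rcases hm2 with ⟨a2, b2⟩ | ⟨a2, b2⟩
        · rcases hm3 with ⟨a3, b3⟩ | ⟨a3, b3⟩
          · rcases hm4 with ⟨a4, b4⟩ | ⟨a4, b4⟩
            · rcases hm5 with ⟨a5, b5⟩ | ⟨a5, b5⟩
              · omega
              · omega
            · rcases hm5 with ⟨a5, b5⟩ | ⟨a5, b5⟩
              · omega
              · have k1 := h3 2 3 0 1 (by decide) (by decide) (by decide) (by decide) (by decide) (by decide)
                have k2 := h3 2 3 0 4 (by decide) (by decide) (by decide) (by decide) (by decide) (by decide)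
                have k3 := h3 2 3 0 5 (by decide) (by decide) (by decide) (by decide) (by decide) (by decide)
                exact (mod3_two_zeros (q 2) (q 3) (q 0) (q 1) (q 4) (q 5) a2 a3 a0 a1 a4 a5 (by omega) k1 k2 k3).elim
          · rcases hm4 with ⟨a4, b4⟩ | ⟨a4, b4⟩
            · rcases hm5 with ⟨a5, b5⟩ | ⟨a5, b5⟩
              · omega
              · have k1 := h3 2 4 0 1 (by decide) (by decide) (by decide) (by decide) (by decide) (by decide)
                have k2 := h3 2 4 0 3 (by decide) (by decide) (by decide) (by decide) (by decide) (by decide)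
                have k3 := h3 2 4 0 5 (by decide) (by decide) (by decide) (by decide) (by decide) (by decide)
                exact (mod3_two_zeros (q 2) (q 4) (q 0) (q 1) (q 3) (q 5) a2 a4 a0 a1 a3 a5 (by omega) k1 k2 k3).elim
            · rcases hm5 with ⟨a5, b5⟩ | ⟨a5, b5⟩
              · have k1 := h3 2 5 0 1 (by decide) (by decide) (by decide) (by decide) (by decide) (by decide)
                have k2 := h3 2 5 0 3 (by decide) (by decide) (by decide) (by decide) (by decide) (by decide)
                have k3 := h3 2 5 0 4 (by decide) (by decide) (by decide) (by decide) (by decide) (by decide)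
                exact (mod3_two_zeros (q 2) (q 5) (q 0) (q 1) (q 3) (q 4) a2 a5 a0 a1 a3 a4 (by omega) k1 k2 k3).elim
              · omega
        · rcases hm3 with ⟨a3, b3⟩ | ⟨a3, b3⟩
          · rcases hm4 with ⟨a4, b4⟩ | ⟨a4, b4⟩
            · rcases hm5 with ⟨a5, b5⟩ | ⟨a5, b5⟩
              · omega
              · have k1 := h3 3 4 0 1 (by decide) (by decide) (by decide) (by decide) (by decide) (by decide)
                have k2 := h3 3 4 0 2 (by decide) (by decide) (by decide) (by decide) (by decide) (by decide)
                have k3 := h3 3 4 0 5 (by decide) (by decide) (by decide) (by decide) (by decide) (by decide)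
                exact (mod3_two_zeros (q 3) (q 4) (q 0) (q 1) (q 2) (q 5) a3 a4 a0 a1 a2 a5 (by omega) k1 k2 k3).elim
            · rcases hm5 with ⟨a5, b5⟩ | ⟨a5, b5⟩
              · have k1 := h3 3 5 0 1 (by decide) (by decide) (by decide) (by decide) (by decide) (by decide)
                have k2 := h3 3 5 0 2 (by decide) (by decide) (by decide) (by decide) (by decide) (by decide)
                have k3 := h3 3 5 0 4 (by decide) (by decide) (by decide) (by decide) (by decide) (by decide)
                exact (mod3_two_zeros (q 3) (q 5) (q 0) (q 1) (q 2) (q 4) a3 a5 a0 a1 a2 a4 (by omega) k1 k2 k3).elim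
              · omega
          · rcases hm4 with ⟨a4, b4⟩ | ⟨a4, b4⟩
            · rcases hm5 with ⟨a5, b5⟩ | ⟨a5, b5⟩
              · have k1 := h3 4 5 0 1 (by decide) (by decide) (by decide) (by decide) (by decide) (by decide)
                have k2 := h3 4 5 0 2 (by decide) (by decide) (by decide) (by decide) (by decide) (by decide)
                have k3 := h3 4 5 0 3 (by decide) (by decide) (by decide) (by decide) (by decide) (by decide)
                exact (mod3_two_zeros (q 4) (q 5) (q 0) (q 1) (q 2) (q 3) a4 a5 a0 a1 a2 a3 (by omega) k1 k2 k3).elim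
              · omega
            · rcases hm5 with ⟨a5, b5⟩ | ⟨a5, b5⟩
              · omega
              · omega
  -- Step A : s2 % 8 = 1
  have hA : s2 % 8 = 1 := by
    obtain ⟨c0, hq0⟩ := hodd 0
    obtain ⟨c1, hq1⟩ := hodd 1
    obtain ⟨c2, hq2⟩ := hodd 2
    obtain ⟨c3, hq3⟩ := hodd 3
    obtain ⟨c4, hq4⟩ := hodd 4
    obtain ⟨c5, hq5⟩ := hodd 5
    have key2 : 4 * c0 ^ 2 + 4 * c1 ^ 2 + 4 * c2 ^ 2 + 4 * c3 ^ 2 + 4 * c4 ^ 2 + 4 * c5 ^ 2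
        + 4 * (c0 + c1 + c2 + c3 + c4 + c5) + 6 = -2 * s2 := by
      rw [hq0, hq1, hq2, hq3, hq4, hq5] at key
      linear_combination key
    have hv0 := sq_mod4 c0
    have hv1 := sq_mod4 c1
    have hv2 := sq_mod4 c2
    have hv3 := sq_mod4 c3
    have hv4 := sq_mod4 c4
    have hv5 := sq_mod4 c5
    obtain ⟨v0, hw0⟩ : ∃ v, c0 ^ 2 = v := ⟨_, rfl⟩
    obtain ⟨v1, hw1⟩ : ∃ v, c1 ^ 2 = v := ⟨_, rfl⟩
    obtain ⟨v2, hw2⟩ : ∃ v, c2 ^ 2 = v := ⟨_, rfl⟩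
    obtain ⟨v3, hw3⟩ : ∃ v, c3 ^ 2 = v := ⟨_, rfl⟩
    obtain ⟨v4, hw4⟩ : ∃ v, c4 ^ 2 = v := ⟨_, rfl⟩
    obtain ⟨v5, hw5⟩ : ∃ v, c5 ^ 2 = v := ⟨_, rfl⟩
    rw [hw0, hw1, hw2, hw3, hw4, hw5] at key2
    rw [hw0] at hv0
    rw [hw1] at hv1
    rw [hw2] at hv2
    rw [hw3] at hv3
    rw [hw4] at hv4
    rw [hw5] at hv5
    have g0' := h4 0 1 2 3 (by decide) (by decide) (by decide) (by decide) (by decide) (by decide)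
    have g1' := h4 0 2 1 4 (by decide) (by decide) (by decide) (by decide) (by decide) (by decide)
    have g2' := h4 0 5 1 3 (by decide) (by decide) (by decide) (by decide) (by decide) (by decide)
    have g0 := pair4 _ _ _ _ _ _ _ _ hq0 hq1 hq2 hq3 g0'
    have g1 := pair4 _ _ _ _ _ _ _ _ hq0 hq2 hq1 hq4 g1'
    have g2 := pair4 _ _ _ _ _ _ _ _ hq0 hq5 hq1 hq3 g2'
    clear g0' g1' g2' key hexp hgcd hodd h3 h4
    rcases g0 with g0 | g0 <;> rcases g1 with g1 | g1 <;> rcases g2 with g2 | g2 <;> omega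
  simp only [Int.ModEq]
  omega
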